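/- Let c : ℝⁿ → ℝ^m be C² with each component satisfying ½|dᵀ∇²c_j(x)d| ≤ H‖d‖². Suppose d satisfies c(x) + ∇c(x)ᵀd = 0 componentwise. Then ‖c(x + βd)‖₁ ≤ (1-β)‖c(x)‖₁ + mβ²H‖d‖² for β ∈ [0,1]. -/

import Mathlib

private lemma aux_mono (K β : ℝ) (hβ : 0 ≤ β) (w w' : ℝ → ℝ) (hw0 : w 0 = 0)
    (hw : ∀ t, HasDerivAt w (w' t) t)
    (hb : ∀ t ∈ Set.Icc (0:ℝ) β, w' t ≤ K * t) :
    w β ≤ K / 2 * β ^ 2 := by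
  set u : ℝ → ℝ := fun t => K / 2 * t ^ 2 - w t with hu
  have hud : ∀ t : ℝ, HasDerivAt u (K * t - w' t) t := by
    intro t
    have h1 : HasDerivAt (fun t : ℝ => K / 2 * t ^ 2) (K / 2 * (2 * t ^ 1)) t :=
      (hasDerivAt_pow 2 t).const_mul (K / 2)
    have := h1.sub (hw t)
    rw [show K * t - w' t = K / 2 * (2 * t ^ 1) - w' t by ring]
    exact this
  have hmono : MonotoneOn u (Set.Icc 0 β) := by
    apply monotoneOn_of_deriv_nonneg (convex_Icc 0 β)
    · exact fun t _ => ((hud t).differentiableAt).continuousAt.continuousWithinAt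
    · exact fun t _ => ((hud t).differentiableAt).differentiableWithinAt
    · intro t ht
      rw [interior_Icc] at ht
      rw [(hud t).deriv]
      have := hb t ⟨le_of_lt ht.1, le_of_lt ht.2⟩
      linarith
  have h0 : u 0 ≤ u β := hmono ⟨le_refl 0, hβ⟩ ⟨hβ, le_refl β⟩ hβ
  simp only [hu, hw0] at h0
  simp only [ne_eq, OfNat.ofNat_ne_zero, not_false_eq_true, zero_pow, mul_zero, sub_zero] at h0
  linarith

private lemma aux_taylor {E : Type*} [NormedAddCommGroup E] [NormedSpace ℝ E]
    (f : E → ℝ) (hf : ContDiff ℝ 2 f) (K : ℝ) (hK : 0 ≤ K)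
    (hb : ∀ y : E, ∀ v : E, |iteratedFDeriv ℝ 2 f y ![v, v]| ≤ K * ‖v‖ ^ 2)
    (x d : E) (β : ℝ) (hβ : 0 ≤ β) :
    |f (x + β • d) - f x - β * fderiv ℝ f x d| ≤ K / 2 * β ^ 2 * ‖d‖ ^ 2 := by
  set L : ℝ → E := fun t => x + t • d with hL
  have hline : ∀ t : ℝ, HasDerivAt L d t := by
    intro t
    have : HasDerivAt (fun t : ℝ => t • d) ((1:ℝ) • d) t := (hasDerivAt_id t).smul_const d
    simpa [hL] using this.const_add x
  set g1 : ℝ → ℝ := fun t => fderiv ℝ f (L t) d with hg1def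
  have hg1 : ∀ t : ℝ, HasDerivAt (fun t => f (L t)) (g1 t) t := by
    intro t
    exact ((hf.differentiable (by norm_num)).differentiableAt.hasFDerivAt).comp_hasDerivAt
      t (hline t)
  have hF : ContDiff ℝ 1 (fderiv ℝ f) := hf.fderiv_right (le_refl _)
  have hg2 : ∀ t : ℝ, HasDerivAt g1 (fderiv ℝ (fderiv ℝ f) (L t) d d) t := by
    intro t
    have h1 : HasDerivAt (fun t => fderiv ℝ f (L t)) (fderiv ℝ (fderiv ℝ f) (L t) d) t :=
      ((hF.differentiable (by norm_num)).differentiableAt.hasFDerivAt).comp_hasDerivAt t (hline t)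
    have h2 : HasDerivAt (fun _ : ℝ => d) (0 : E) t := hasDerivAt_const t d
    have := h1.clm_apply h2
    simpa using this
  -- bound on second derivative
  have hg2b : ∀ t : ℝ, |fderiv ℝ (fderiv ℝ f) (L t) d d| ≤ K * ‖d‖ ^ 2 := by
    intro t
    have := hb (L t) d
    rwa [iteratedFDeriv_two_apply] at this
    -- note: m 0 = d, m 1 = d definitionaly for ![d,d]
  -- MVT: |g1 t - g1 0| ≤ K‖d‖² * |t|
  have hg1lip : ∀ t : ℝ, |g1 t - g1 0| ≤ K * ‖d‖ ^ 2 * |t| := by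
    intro t
    have := Convex.norm_image_sub_le_of_norm_hasDerivWithin_le
      (f := g1) (f' := fun t => fderiv ℝ (fderiv ℝ f) (L t) d d) (s := Set.univ)
      (fun s _ => (hg2 s).hasDerivWithinAt) (fun s _ => hg2b s) convex_univ
      (Set.mem_univ 0) (Set.mem_univ t)
    simpa using this
  -- w t := f (L t) - f (L 0) - t * g1 0
  set w : ℝ → ℝ := fun t => f (L t) - f (L 0) - t * g1 0 with hwdef
  have hw0 : w 0 = 0 := by simp [hwdef]
  have hw : ∀ t : ℝ, HasDerivAt w (g1 t - g1 0) t := by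
    intro t
    have h1 := (hg1 t).sub_const (f (L 0))
    have h2 : HasDerivAt (fun t : ℝ => t * g1 0) (g1 0) t := by
      simpa using (hasDerivAt_id t).mul_const (g1 0)
    exact h1.sub h2
  have hub : w β ≤ K * ‖d‖ ^ 2 / 2 * β ^ 2 := by
    apply aux_mono _ _ hβ _ _ hw0 hw
    intro t ht
    have := hg1lip t
    rw [abs_of_nonneg ht.1] at this
    have := abs_le.mp this
    linarith [this.2]
  have hlb : -w β ≤ K * ‖d‖ ^ 2 / 2 * β ^ 2 := by
    apply aux_mono _ _ hβ (fun t => -w t) (fun t => -(g1 t - g1 0)) (by simp [hw0])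
      (fun t => (hw t).neg)
    intro t ht
    have := hg1lip t
    rw [abs_of_nonneg ht.1] at this
    have := abs_le.mp this
    linarith [this.1]
  have habs : |w β| ≤ K * ‖d‖ ^ 2 / 2 * β ^ 2 := abs_le.mpr ⟨by linarith, hub⟩
  have hLβ : L β = x + β • d := rfl
  have hL0 : L 0 = x := by simp [hL]
  have hg10 : g1 0 = fderiv ℝ f x d := by simp [hg1def, hL]
  calc |f (x + β • d) - f x - β * fderiv ℝ f x d| = |w β| := by
        rw [hwdef]; simp only [hLβ, hL0, hg10]
    _ ≤ K * ‖d‖ ^ 2 / 2 * β ^ 2 := habs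
    _ = K / 2 * β ^ 2 * ‖d‖ ^ 2 := by ring

/-- For `c : ℝⁿ → ℝ^m` C² componentwise with uniform Hessian bound `H`, if `d`
solves the linearized system `c_j(x) + Dc_j(x)[d] = 0` for all `j`, then
`‖c(x+β•d)‖₁ ≤ (1-β)‖c(x)‖₁ + mβ²H‖d‖²` for `β ∈ [0,1]`. -/
theorem stmt6 {n m : ℕ} (c : Fin m → EuclideanSpace ℝ (Fin n) → ℝ)
    (hc : ∀ j, ContDiff ℝ 2 (c j)) (H : ℝ) (hH0 : 0 ≤ H)
    (hH : ∀ j, ∀ (y v : EuclideanSpace ℝ (Fin n)),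
      1 / 2 * |iteratedFDeriv ℝ 2 (c j) y ![v, v]| ≤ H * ‖v‖ ^ 2)
    (x d : EuclideanSpace ℝ (Fin n))
    (hlin : ∀ j, c j x + fderiv ℝ (c j) x d = 0)
    (β : ℝ) (hβ0 : 0 ≤ β) (hβ1 : β ≤ 1) :
    ∑ j, |c j (x + β • d)| ≤ (1 - β) * ∑ j, |c j x| + m * β ^ 2 * H * ‖d‖ ^ 2 := by
  have key : ∀ j, |c j (x + β • d)| ≤ (1 - β) * |c j x| + β ^ 2 * H * ‖d‖ ^ 2 := by
    intro j
    have hb : ∀ y v : EuclideanSpace ℝ (Fin n),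
        |iteratedFDeriv ℝ 2 (c j) y ![v, v]| ≤ (2 * H) * ‖v‖ ^ 2 := by
      intro y v
      have := hH j y v
      linarith
    have ht := aux_taylor (c j) (hc j) (2 * H) (by linarith) hb x d β hβ0
    have hd : fderiv ℝ (c j) x d = -(c j x) := by linarith [hlin j]
    rw [hd] at ht
    have h1 : |c j (x + β • d) - (1 - β) * c j x| ≤ H * β ^ 2 * ‖d‖ ^ 2 := by
      have : c j (x + β • d) - c j x - β * (-(c j x)) = c j (x + β • d) - (1 - β) * c j x := by
        ring
      rw [this] at ht
      calc |c j (x + β • d) - (1 - β) * c j x| ≤ 2 * H / 2 * β ^ 2 * ‖d‖ ^ 2 := ht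
        _ = H * β ^ 2 * ‖d‖ ^ 2 := by ring
    have h2 : |c j (x + β • d)| ≤ |(1 - β) * c j x| + H * β ^ 2 * ‖d‖ ^ 2 := by
      have := abs_sub_abs_le_abs_sub (c j (x + β • d)) ((1 - β) * c j x)
      linarith
    rw [abs_mul, abs_of_nonneg (by linarith : (0:ℝ) ≤ 1 - β)] at h2
    linarith
  calc ∑ j, |c j (x + β • d)| ≤ ∑ j, ((1 - β) * |c j x| + β ^ 2 * H * ‖d‖ ^ 2) :=
        Finset.sum_le_sum fun j _ => key j
    _ = (1 - β) * ∑ j, |c j x| + m * β ^ 2 * H * ‖d‖ ^ 2 := by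
        rw [Finset.sum_add_distrib, Finset.sum_const, ← Finset.mul_sum]
        simp [Finset.card_univ]
        ring
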